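/- Let Φ be an m×n complex matrix and let S be a natural number. Then every nonzero vector w ∈ ℂ^n with Φw = 0 satisfies ‖w‖₀ > 2S (i.e., Spark(Φ) > 2S) if and only if S-sparse representations under Φ are unique, i.e., for all w₁, w₂ ∈ ℂ^n with Φw₁ = Φw₂, ‖w₁‖₀ ≤ S and ‖w₂‖₀ ≤ S, one has w₁ = w₂. -/

import Mathlib

/-- The ℓ₀-"norm" of a vector: the number of nonzero entries. -/
noncomputable def l0norm {n : ℕ} (w : Fin n → ℂ) : ℕ :=
  Nat.card (Function.support w)

lemma l0norm_eq {n : ℕ} (w : Fin n → ℂ) :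
    l0norm w = (Finset.univ.filter (fun i => w i ≠ 0)).card := by
  classical
  rw [l0norm, Nat.card_eq_card_toFinset]
  congr 1
  ext i
  simp [Function.mem_support]

/-- Spark(Φ) > 2S (every nonzero kernel vector has more than 2S nonzero entries)
iff S-sparse representations under Φ are unique. -/
theorem spark_gt_two_s_iff_sparse_unique {m n : ℕ}
    (Φ : Matrix (Fin m) (Fin n) ℂ) (S : ℕ) :
    (∀ w : Fin n → ℂ, w ≠ 0 → Φ.mulVec w = 0 → 2 * S < l0norm w) ↔
    (∀ w₁ w₂ : Fin n → ℂ, Φ.mulVec w₁ = Φ.mulVec w₂ →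
      l0norm w₁ ≤ S → l0norm w₂ ≤ S → w₁ = w₂) := by
  constructor
  · intro h w₁ w₂ heq h1 h2
    by_contra hne
    have hw : w₁ - w₂ ≠ 0 := sub_ne_zero.mpr hne
    have hker : Φ.mulVec (w₁ - w₂) = 0 := by
      rw [Matrix.mulVec_sub, heq, sub_self]
    have := h _ hw hker
    have hle : l0norm (w₁ - w₂) ≤ l0norm w₁ + l0norm w₂ := by
      simp only [l0norm_eq]
      refine le_trans (Finset.card_le_card ?_) (Finset.card_union_le _ _)
      intro i hi
      simp only [Finset.mem_filter, Finset.mem_union, Finset.mem_univ, true_and,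
        Pi.sub_apply] at hi ⊢
      by_contra hc
      push_neg at hc
      simp [hc.1, hc.2] at hi
    omega
  · intro h w hw hker
    by_contra hle
    push_neg at hle
    set A := Finset.univ.filter (fun i => w i ≠ 0) with hA
    have hAcard : A.card ≤ 2 * S := by rw [← l0norm_eq]; exact hle
    obtain ⟨B, hB, hBcard⟩ := Finset.exists_subset_card_eq (s := A) (n := min S A.card) (min_le_right _ _)
    set w₁ : Fin n → ℂ := fun i => if i ∈ B then w i else 0 with hw₁
    set w₂ : Fin n → ℂ := fun i => if i ∈ A \ B then -w i else 0 with hw₂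
    have hdiff : w₁ - w₂ = w := by
      funext i
      simp only [Pi.sub_apply, hw₁, hw₂, Finset.mem_sdiff]
      by_cases hiB : i ∈ B
      · simp [hiB]
      · by_cases hiA : i ∈ A
        · simp [hiB, hiA]
        · have : w i = 0 := by
            by_contra hc
            exact hiA (by simp [hA, hc])
          simp [hiB, hiA, this]
    have hmul : Φ.mulVec w₁ = Φ.mulVec w₂ := by
      have : Φ.mulVec w₁ - Φ.mulVec w₂ = 0 := by
        rw [← Matrix.mulVec_sub, hdiff, hker]
      exact sub_eq_zero.mp this
    have hcard1 : l0norm w₁ ≤ S := by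
      rw [l0norm_eq]
      calc (Finset.univ.filter (fun i => w₁ i ≠ 0)).card ≤ B.card := by
            apply Finset.card_le_card
            intro i hi
            simp only [Finset.mem_filter, hw₁] at hi
            by_contra hc
            simp [hc] at hi
        _ ≤ S := by omega
    have hcard2 : l0norm w₂ ≤ S := by
      rw [l0norm_eq]
      calc (Finset.univ.filter (fun i => w₂ i ≠ 0)).card ≤ (A \ B).card := by
            apply Finset.card_le_card
            intro i hi
            simp only [Finset.mem_filter, hw₂] at hi
            by_contra hc
            simp [hc] at hi
        _ ≤ S := by
            rw [Finset.card_sdiff_of_subset hB]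
            omega
    have := h w₁ w₂ hmul hcard1 hcard2
    apply hw
    rw [← hdiff, this, sub_self]
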